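/- arXiv:1902.03189 — 4 statements merged into one kernel-verified Lean document; each statement's English description precedes it below -/
import Mathlib

section
/- Let λ, σ > 0 and t₀ ∈ ℝ. Define Ȳ(t) = λ^(1/σ) e^(−λt) / (e^(−λσ(t−1)) + C)^(1/σ) for a constant C > 0. Then Ȳ satisfies the delay differential inequality Ȳ'(t) ≥ −λ Ȳ(t) + Ȳ(t−1)^σ · Ȳ(t) for all t ≥ t₀ + 1. -/
theorem stmt_4 (lam sig C t₀ : ℝ) (hlam : 0 < lam) (hsig : 0 < sig) (hC : 0 < C) :
    ∀ t : ℝ, t₀ + 1 ≤ t →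
      deriv (fun s : ℝ =>
          lam ^ (1 / sig) * Real.exp (-lam * s) /
            (Real.exp (-lam * sig * (s - 1)) + C) ^ (1 / sig)) t
        ≥ -lam * (lam ^ (1 / sig) * Real.exp (-lam * t) /
              (Real.exp (-lam * sig * (t - 1)) + C) ^ (1 / sig))
          + (lam ^ (1 / sig) * Real.exp (-lam * (t - 1)) /
              (Real.exp (-lam * sig * (t - 1 - 1)) + C) ^ (1 / sig)) ^ sig
            * (lam ^ (1 / sig) * Real.exp (-lam * t) /
              (Real.exp (-lam * sig * (t - 1)) + C) ^ (1 / sig)) := by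
  intro t _
  have hσ : sig ≠ 0 := hsig.ne'
  set g : ℝ := Real.exp (-lam * sig * (t - 1)) + C with hgdef
  set g2 : ℝ := Real.exp (-lam * sig * (t - 1 - 1)) + C with hg2def
  have hg : 0 < g := by positivity
  have hg2 : 0 < g2 := by positivity
  have hD : 0 < g ^ (1 / sig) := Real.rpow_pos_of_pos hg _
  have hD2 : 0 < g2 ^ (1 / sig) := Real.rpow_pos_of_pos hg2 _
  -- derivative of numerator exponential
  have hlin : HasDerivAt (fun s : ℝ => -lam * s) (-lam) t := by
    simpa using (hasDerivAt_id t).const_mul (-lam)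
  have hE : HasDerivAt (fun s : ℝ => Real.exp (-lam * s))
      (Real.exp (-lam * t) * (-lam)) t := hlin.exp
  have hN : HasDerivAt (fun s : ℝ => lam ^ (1 / sig) * Real.exp (-lam * s))
      (lam ^ (1 / sig) * (Real.exp (-lam * t) * (-lam))) t := hE.const_mul _
  -- derivative of denominator
  have hlin2 : HasDerivAt (fun s : ℝ => -lam * sig * (s - 1)) (-lam * sig) t := by
    simpa using ((hasDerivAt_id t).sub_const 1).const_mul (-lam * sig)
  have hgd : HasDerivAt (fun s : ℝ => Real.exp (-lam * sig * (s - 1)) + C)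
      (Real.exp (-lam * sig * (t - 1)) * (-lam * sig)) t := hlin2.exp.add_const C
  have hDd : HasDerivAt (fun s : ℝ => (Real.exp (-lam * sig * (s - 1)) + C) ^ (1 / sig))
      (Real.exp (-lam * sig * (t - 1)) * (-lam * sig) * (1 / sig) * g ^ (1 / sig - 1)) t :=
    hgd.rpow_const (Or.inl hg.ne')
  have hf : HasDerivAt (fun s : ℝ =>
      lam ^ (1 / sig) * Real.exp (-lam * s) /
        (Real.exp (-lam * sig * (s - 1)) + C) ^ (1 / sig))
      ((lam ^ (1 / sig) * (Real.exp (-lam * t) * (-lam)) * g ^ (1 / sig)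
        - lam ^ (1 / sig) * Real.exp (-lam * t) *
          (Real.exp (-lam * sig * (t - 1)) * (-lam * sig) * (1 / sig) * g ^ (1 / sig - 1)))
        / (g ^ (1 / sig)) ^ 2) t := hN.div hDd hD.ne'
  rw [hf.deriv]
  have hsub : g ^ (1 / sig - 1) = g ^ (1 / sig) / g := by
    rw [Real.rpow_sub hg, Real.rpow_one]
  have key : (lam ^ (1 / sig) * (Real.exp (-lam * t) * (-lam)) * g ^ (1 / sig)
        - lam ^ (1 / sig) * Real.exp (-lam * t) *
          (Real.exp (-lam * sig * (t - 1)) * (-lam * sig) * (1 / sig) * g ^ (1 / sig - 1)))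
        / (g ^ (1 / sig)) ^ 2
      = -lam * (lam ^ (1 / sig) * Real.exp (-lam * t) / g ^ (1 / sig))
        + (lam * Real.exp (-lam * sig * (t - 1)) / g) *
          (lam ^ (1 / sig) * Real.exp (-lam * t) / g ^ (1 / sig)) := by
    rw [hsub]
    field_simp
    ring
  rw [key]
  have hYσ : (lam ^ (1 / sig) * Real.exp (-lam * (t - 1)) / g2 ^ (1 / sig)) ^ sig
      = lam * Real.exp (-lam * sig * (t - 1)) / g2 := by
    have h1 : (lam ^ (1 / sig)) ^ sig = lam := by
      rw [← Real.rpow_mul hlam.le, one_div, inv_mul_cancel₀ hσ, Real.rpow_one]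
    have h2 : (g2 ^ (1 / sig)) ^ sig = g2 := by
      rw [← Real.rpow_mul hg2.le, one_div, inv_mul_cancel₀ hσ, Real.rpow_one]
    have h3 : Real.exp (-lam * (t - 1)) ^ sig = Real.exp (-lam * sig * (t - 1)) := by
      rw [← Real.exp_mul]; congr 1; ring
    rw [Real.div_rpow (by positivity) hD2.le,
      Real.mul_rpow (by positivity) (Real.exp_pos _).le, h1, h2, h3]
  rw [hYσ]
  apply add_le_add_right
  have hgle : g ≤ g2 := by
    apply add_le_add_left
    apply Real.exp_le_exp.mpr
    nlinarith
  apply mul_le_mul_of_nonneg_right _ (by positivity)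
  apply div_le_div_of_nonneg_left (by positivity) hg hgle
end

section
/- Let H be a real Hilbert space, (φₙ)_{n≥1} an orthonormal basis of H, and (λₙ)_{n≥1} a nondecreasing sequence of positive reals. Fix an integer k ≥ 1 and ε ∈ (0,1). Suppose φ ∈ H satisfies |⟨φ, φⱼ⟩| ≤ ε‖φ‖ for all j ≤ k, and suppose the quadratic form Q(φ) := Σₙ λₙ ⟨φ, φₙ⟩² is finite. Then Q(φ) ≥ (λ_{k+1} − (λ_{k+1} − λ₁)·k·ε²)·‖φ‖². -/
theorem stmt_6 {H : Type*} [NormedAddCommGroup H] [InnerProductSpace ℝ H] [CompleteSpace H]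
    (b : HilbertBasis ℕ ℝ H) (lam : ℕ → ℝ) (hmono : Monotone lam) (hpos : ∀ n, 0 < lam n)
    (k : ℕ) (hk : 1 ≤ k) (ε : ℝ) (hε0 : 0 < ε) (hε1 : ε < 1) (φ : H)
    (hAO : ∀ j < k, |(inner ℝ φ (b j) : ℝ)| ≤ ε * ‖φ‖)
    (hQ : Summable (fun n => lam n * (inner ℝ φ (b n) : ℝ) ^ 2)) :
    (∑' n, lam n * (inner ℝ φ (b n) : ℝ) ^ 2)
      ≥ (lam k - (lam k - lam 0) * k * ε ^ 2) * ‖φ‖ ^ 2 := by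
  set c : ℕ → ℝ := fun n => (inner ℝ φ (b n) : ℝ) with hc
  have hsq : (fun n => c n ^ 2) = fun n => (inner ℝ φ (b n) : ℝ) * (inner ℝ (b n) φ : ℝ) := by
    funext n
    have := real_inner_comm (b n) φ
    simp only [hc]
    rw [this]; ring
  have hsum2 : Summable (fun n => c n ^ 2) := by
    rw [hsq]; exact b.summable_inner_mul_inner φ φ
  have hpar : (∑' n, c n ^ 2) = ‖φ‖ ^ 2 := by
    rw [hsq, b.tsum_inner_mul_inner φ φ, real_inner_self_eq_norm_sq]
  have hlk0 : lam 0 ≤ lam k := hmono (Nat.zero_le k)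
  -- auxiliary function
  set g : ℕ → ℝ := fun n => lam k * c n ^ 2 -
      (if n < k then (lam k - lam 0) * c n ^ 2 else 0) with hg
  have hfin : ∀ n ∉ Finset.range k,
      (fun n => if n < k then (lam k - lam 0) * c n ^ 2 else 0) n = 0 := by
    intro n hn
    simp [Finset.mem_range] at hn
    simp [Nat.not_lt.mpr hn]
  have hsumfin : Summable (fun n => if n < k then (lam k - lam 0) * c n ^ 2 else 0) :=
    summable_of_ne_finset_zero hfin
  have hsumg : Summable g := (hsum2.mul_left (lam k)).sub hsumfin
  have hptwise : ∀ n, g n ≤ lam n * c n ^ 2 := by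
    intro n
    have hc2 : (0:ℝ) ≤ c n ^ 2 := sq_nonneg _
    by_cases hn : n < k
    · simp only [hg, if_pos hn]
      have : lam 0 * c n ^ 2 ≤ lam n * c n ^ 2 :=
        mul_le_mul_of_nonneg_right (hmono (Nat.zero_le n)) hc2
      nlinarith
    · simp only [hg, if_neg hn]
      have : lam k * c n ^ 2 ≤ lam n * c n ^ 2 :=
        mul_le_mul_of_nonneg_right (hmono (Nat.le_of_not_lt hn)) hc2
      linarith
  have hle : (∑' n, g n) ≤ ∑' n, lam n * c n ^ 2 := Summable.tsum_le_tsum hptwise hsumg hQ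
  have htg : (∑' n, g n) = lam k * ‖φ‖ ^ 2 -
      ∑ n ∈ Finset.range k, (lam k - lam 0) * c n ^ 2 := by
    rw [hg, Summable.tsum_sub (hsum2.mul_left (lam k)) hsumfin, tsum_mul_left, hpar,
      tsum_eq_sum hfin]
    congr 1
    apply Finset.sum_congr rfl
    intro n hn
    rw [if_pos (Finset.mem_range.mp hn)]
  have hbound : ∑ n ∈ Finset.range k, (lam k - lam 0) * c n ^ 2
      ≤ (lam k - lam 0) * k * ε ^ 2 * ‖φ‖ ^ 2 := by
    have : ∀ n ∈ Finset.range k, (lam k - lam 0) * c n ^ 2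
        ≤ (lam k - lam 0) * (ε ^ 2 * ‖φ‖ ^ 2) := by
      intro n hn
      rw [Finset.mem_range] at hn
      have h1 : |c n| ≤ ε * ‖φ‖ := hAO n hn
      have h2 : c n ^ 2 ≤ (ε * ‖φ‖) ^ 2 := by
        rw [← sq_abs]
        exact pow_le_pow_left₀ (abs_nonneg _) h1 2
      have : c n ^ 2 ≤ ε ^ 2 * ‖φ‖ ^ 2 := by nlinarith
      exact mul_le_mul_of_nonneg_left this (by linarith)
    calc ∑ n ∈ Finset.range k, (lam k - lam 0) * c n ^ 2
        ≤ ∑ n ∈ Finset.range k, (lam k - lam 0) * (ε ^ 2 * ‖φ‖ ^ 2) :=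
          Finset.sum_le_sum this
      _ = (lam k - lam 0) * k * ε ^ 2 * ‖φ‖ ^ 2 := by
          rw [Finset.sum_const, Finset.card_range]; ring
  have : (lam k - (lam k - lam 0) * k * ε ^ 2) * ‖φ‖ ^ 2 ≤ ∑' n, g n := by
    rw [htg]; nlinarith [hbound]
  exact le_trans this hle
end

section
/- Let p > 1, V > 0, and |f| ≤ δV with 0 < δ < 1/(2p). Then there exists a constant κ_p > 0 depending only on p such that |(V+f)^(p+1) − V^(p+1) − ((p+1)/p)·((V+f)^p − V^p)·V − a·f²| ≤ κ_p·δ·V^(p−1)·f² whenever a = ((p+1)/2)·V^(p−1). In particular, ((p+1)/2)·(1+c_p δ)^(−2)·V^(p−1) f² ≤ (V+f)^(p+1) − V^(p+1) − ((p+1)/p)·((V+f)^p − V^p)·V ≤ ((p+1)/2)·(1+c_p δ)²·V^(p−1) f² for some constant c_p depending only on p. -/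
open Set

lemma key_deriv (p V C x : ℝ) (hp0 : p ≠ 0) (hVx : 0 < V + x) :
    HasDerivAt (fun y => (V + y) ^ (p + 1) - V ^ (p + 1)
        - ((p + 1) / p) * ((V + y) ^ p - V ^ p) * V - ((p + 1) / 2) * C * y ^ 2)
      ((p + 1) * x * ((V + x) ^ (p - 1) - C)) x := by
  have h1 : HasDerivAt (fun y : ℝ => V + y) 1 x := (hasDerivAt_id x).const_add V
  have h2 : HasDerivAt (fun y => (V + y) ^ (p + 1)) ((p + 1) * (V + x) ^ p) x := by
    have := (Real.hasDerivAt_rpow_const (x := V + x) (p := p + 1) (Or.inl hVx.ne')).comp x h1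
    simp only [add_sub_cancel_right, mul_one] at this
    exact this
  have h3 : HasDerivAt (fun y => (V + y) ^ p) (p * (V + x) ^ (p - 1)) x := by
    have := (Real.hasDerivAt_rpow_const (x := V + x) (p := p) (Or.inl hVx.ne')).comp x h1
    simp only [mul_one] at this
    exact this
  have h4 : HasDerivAt (fun y : ℝ => ((p + 1) / 2) * C * y ^ 2)
      (((p + 1) / 2) * C * (2 * x)) x := by
    have := ((hasDerivAt_pow 2 x).const_mul (((p + 1) / 2) * C))
    simpa using this
  have h5 := ((h2.sub_const (V ^ (p + 1))).sub
      (((h3.sub_const (V ^ p)).mul_const V).const_mul ((p + 1) / p))).sub h4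
  have hpow : (V + x) ^ p = (V + x) ^ (p - 1) * (V + x) := by
    rw [← Real.rpow_add_one hVx.ne']; ring_nf
  refine (h5.congr_of_eventuallyEq (Filter.Eventually.of_forall fun y => ?_)).congr_deriv ?_
  · simp only [Pi.sub_apply]; ring
  · rw [hpow]; field_simp; ring

lemma sandwich_lower (p V C f δ : ℝ) (hp : 1 < p) (hV : 0 < V) (hδ : 0 < δ) (hδ1 : δ < 1)
    (hf : |f| ≤ δ * V)
    (hC : ∀ x ∈ Icc (-(δ * V)) (δ * V), C ≤ (V + x) ^ (p - 1)) :
    ((p + 1) / 2) * C * f ^ 2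
      ≤ (V + f) ^ (p + 1) - V ^ (p + 1) - ((p + 1) / p) * ((V + f) ^ p - V ^ p) * V := by
  have hp0 : p ≠ 0 := by linarith
  set g : ℝ → ℝ := fun y => (V + y) ^ (p + 1) - V ^ (p + 1)
      - ((p + 1) / p) * ((V + y) ^ p - V ^ p) * V - ((p + 1) / 2) * C * y ^ 2 with hg
  have hδV : 0 < δ * V := mul_pos hδ hV
  rw [abs_le] at hf
  have hVx : ∀ x ∈ Icc (-(δ * V)) (δ * V), 0 < V + x := by
    intro x hx
    have : -(δ * V) ≤ x := hx.1
    nlinarith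
  have hd : ∀ x ∈ Icc (-(δ * V)) (δ * V),
      HasDerivAt g ((p + 1) * x * ((V + x) ^ (p - 1) - C)) x :=
    fun x hx => key_deriv p V C x hp0 (hVx x hx)
  have hg0 : g 0 = 0 := by simp [hg]
  have key : 0 ≤ g f := by
    rcases le_or_gt 0 f with hf0 | hf0
    · have hsub : Icc (0 : ℝ) f ⊆ Icc (-(δ * V)) (δ * V) :=
        Icc_subset_Icc (by linarith) hf.2
      have mono : MonotoneOn g (Icc 0 f) := by
        apply monotoneOn_of_deriv_nonneg (convex_Icc 0 f)
        · exact fun x hx => ((hd x (hsub hx)).continuousAt).continuousWithinAt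
        · intro x hx
          have hx' := interior_subset hx
          exact ((hd x (hsub hx')).differentiableAt).differentiableWithinAt
        · intro x hx
          rw [interior_Icc] at hx
          rw [(hd x (hsub (Ioo_subset_Icc_self hx))).deriv]
          have h1 : 0 ≤ (V + x) ^ (p - 1) - C := by
            have := hC x (hsub (Ioo_subset_Icc_self hx)); linarith
          have h2 : (0:ℝ) ≤ x := hx.1.le
          positivity
      have := mono (left_mem_Icc.2 hf0) (right_mem_Icc.2 hf0) hf0
      rwa [hg0] at this
    · have hsub : Icc f (0 : ℝ) ⊆ Icc (-(δ * V)) (δ * V) :=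
        Icc_subset_Icc hf.1 (by linarith)
      have anti : AntitoneOn g (Icc f 0) := by
        apply antitoneOn_of_deriv_nonpos (convex_Icc f 0)
        · exact fun x hx => ((hd x (hsub hx)).continuousAt).continuousWithinAt
        · intro x hx
          have hx' := interior_subset hx
          exact ((hd x (hsub hx')).differentiableAt).differentiableWithinAt
        · intro x hx
          rw [interior_Icc] at hx
          rw [(hd x (hsub (Ioo_subset_Icc_self hx))).deriv]
          have h1 : 0 ≤ (V + x) ^ (p - 1) - C := by
            have := hC x (hsub (Ioo_subset_Icc_self hx)); linarith
          have h2 : x ≤ 0 := hx.2.le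
          have h3 : (0:ℝ) < p + 1 := by linarith
          nlinarith [mul_nonneg (mul_nonneg h3.le (neg_nonneg.2 h2)) h1]
      have := anti (left_mem_Icc.2 hf0.le) (right_mem_Icc.2 hf0.le) hf0.le
      rwa [hg0] at this
  have : g f = (V + f) ^ (p + 1) - V ^ (p + 1)
      - ((p + 1) / p) * ((V + f) ^ p - V ^ p) * V - ((p + 1) / 2) * C * f ^ 2 := rfl
  rw [this] at key; linarith

lemma sandwich_upper (p V C f δ : ℝ) (hp : 1 < p) (hV : 0 < V) (hδ : 0 < δ) (hδ1 : δ < 1)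
    (hf : |f| ≤ δ * V)
    (hC : ∀ x ∈ Icc (-(δ * V)) (δ * V), (V + x) ^ (p - 1) ≤ C) :
    (V + f) ^ (p + 1) - V ^ (p + 1) - ((p + 1) / p) * ((V + f) ^ p - V ^ p) * V
      ≤ ((p + 1) / 2) * C * f ^ 2 := by
  have hp0 : p ≠ 0 := by linarith
  set g : ℝ → ℝ := fun y => (V + y) ^ (p + 1) - V ^ (p + 1)
      - ((p + 1) / p) * ((V + y) ^ p - V ^ p) * V - ((p + 1) / 2) * C * y ^ 2 with hg
  have hδV : 0 < δ * V := mul_pos hδ hV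
  rw [abs_le] at hf
  have hVx : ∀ x ∈ Icc (-(δ * V)) (δ * V), 0 < V + x := by
    intro x hx
    have : -(δ * V) ≤ x := hx.1
    nlinarith
  have hd : ∀ x ∈ Icc (-(δ * V)) (δ * V),
      HasDerivAt g ((p + 1) * x * ((V + x) ^ (p - 1) - C)) x :=
    fun x hx => key_deriv p V C x hp0 (hVx x hx)
  have hg0 : g 0 = 0 := by simp [hg]
  have key : g f ≤ 0 := by
    rcases le_or_gt 0 f with hf0 | hf0
    · have hsub : Icc (0 : ℝ) f ⊆ Icc (-(δ * V)) (δ * V) :=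
        Icc_subset_Icc (by linarith) hf.2
      have anti : AntitoneOn g (Icc 0 f) := by
        apply antitoneOn_of_deriv_nonpos (convex_Icc 0 f)
        · exact fun x hx => ((hd x (hsub hx)).continuousAt).continuousWithinAt
        · intro x hx
          have hx' := interior_subset hx
          exact ((hd x (hsub hx')).differentiableAt).differentiableWithinAt
        · intro x hx
          rw [interior_Icc] at hx
          rw [(hd x (hsub (Ioo_subset_Icc_self hx))).deriv]
          have h1 : (V + x) ^ (p - 1) - C ≤ 0 := by
            have := hC x (hsub (Ioo_subset_Icc_self hx)); linarith
          have h2 : (0:ℝ) ≤ x := hx.1.le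
          have h3 : (0:ℝ) < p + 1 := by linarith
          nlinarith [mul_nonneg (mul_nonneg h3.le h2) (neg_nonneg.2 h1)]
      have := anti (left_mem_Icc.2 hf0) (right_mem_Icc.2 hf0) hf0
      rwa [hg0] at this
    · have hsub : Icc f (0 : ℝ) ⊆ Icc (-(δ * V)) (δ * V) :=
        Icc_subset_Icc hf.1 (by linarith)
      have mono : MonotoneOn g (Icc f 0) := by
        apply monotoneOn_of_deriv_nonneg (convex_Icc f 0)
        · exact fun x hx => ((hd x (hsub hx)).continuousAt).continuousWithinAt
        · intro x hx
          have hx' := interior_subset hx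
          exact ((hd x (hsub hx')).differentiableAt).differentiableWithinAt
        · intro x hx
          rw [interior_Icc] at hx
          rw [(hd x (hsub (Ioo_subset_Icc_self hx))).deriv]
          have h1 : (V + x) ^ (p - 1) - C ≤ 0 := by
            have := hC x (hsub (Ioo_subset_Icc_self hx)); linarith
          have h2 : x ≤ 0 := hx.2.le
          have h3 : (0:ℝ) < p + 1 := by linarith
          nlinarith [mul_nonneg (mul_nonneg h3.le (neg_nonneg.2 h2)) (neg_nonneg.2 h1)]
      have := mono (left_mem_Icc.2 hf0.le) (right_mem_Icc.2 hf0.le) hf0.le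
      rwa [hg0] at this
  have : g f = (V + f) ^ (p + 1) - V ^ (p + 1)
      - ((p + 1) / p) * ((V + f) ^ p - V ^ p) * V - ((p + 1) / 2) * C * f ^ 2 := rfl
  rw [this] at key; linarith

lemma bern_up (p d : ℝ) (hp : 1 < p) (hd0 : 0 < d) (hpd : p * d < 1 / 2) :
    (1 + d) ^ (p - 1) ≤ 1 + 2 * p * d := by
  have hd1 : d < 1 / 2 := by nlinarith
  have step1 : (1 + d) ^ (p - 1) ≤ (1 + d) ^ p :=
    Real.rpow_le_rpow_of_exponent_le (by linarith) (by linarith)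
  have hBp : 1 - p * d ≤ (1 - d) ^ p := by
    have h := one_add_mul_self_le_rpow_one_add (s := -d) (by linarith) hp.le
    have e : (1 : ℝ) + -d = 1 - d := by ring
    rw [e] at h
    linarith
  have step2 : (1 + d) ^ p * (1 - d) ^ p ≤ 1 := by
    rw [← Real.mul_rpow (by linarith) (by linarith)]
    apply Real.rpow_le_one (by nlinarith) (by nlinarith) (by linarith)
  have hA : (0:ℝ) < (1 + d) ^ p := Real.rpow_pos_of_pos (by linarith) _
  have h1 := mul_le_mul_of_nonneg_left hBp hA.le
  have h6 : (1 + d) ^ p * (1 - p * d) ≤ 1 := by linarith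
  have hL : (0:ℝ) < 1 - p * d := by linarith
  have htp : (0:ℝ) < p * d := mul_pos (by linarith) hd0
  have h7 : (1:ℝ) ≤ (1 + 2 * p * d) * (1 - p * d) := by nlinarith
  nlinarith [h6, h7, hL, step1]

lemma inv_sq_le (t : ℝ) (ht0 : 0 < t) (ht : t < 1 / 2) :
    (1 + t) ^ (-(2:ℝ)) ≤ 1 - t := by
  have hb : (0:ℝ) < 1 + t := by linarith
  rw [Real.rpow_neg hb.le, Real.rpow_two]
  have hpos : (0:ℝ) < (1 + t) ^ 2 := by positivity
  rw [inv_eq_one_div, div_le_iff₀ hpos]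
  nlinarith [mul_pos ht0 ht0, mul_pos (mul_pos ht0 ht0) ht0,
    mul_lt_mul_of_pos_left ht ht0, mul_lt_mul_of_pos_left (mul_lt_mul_of_pos_left ht ht0) ht0]

lemma le_rpow_sq (t : ℝ) (ht0 : 0 < t) :
    1 + 2 * t ≤ (1 + t) ^ (2:ℝ) := by
  rw [Real.rpow_two]; nlinarith

set_option maxHeartbeats 1000000 in
theorem stmt_9 (p : ℝ) (hp : 1 < p) :
    ∃ κ : ℝ, 0 < κ ∧ ∃ c : ℝ, 0 < c ∧
      ∀ V f δ : ℝ, 0 < V → 0 < δ → δ < 1 / (2 * p) → |f| ≤ δ * V →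
        |((V + f) ^ (p + 1) - V ^ (p + 1) - ((p + 1) / p) * ((V + f) ^ p - V ^ p) * V)
            - ((p + 1) / 2) * V ^ (p - 1) * f ^ 2|
          ≤ κ * δ * V ^ (p - 1) * f ^ 2 ∧
        ((p + 1) / 2) * (1 + c * δ) ^ (-(2 : ℝ)) * V ^ (p - 1) * f ^ 2
          ≤ (V + f) ^ (p + 1) - V ^ (p + 1) - ((p + 1) / p) * ((V + f) ^ p - V ^ p) * V ∧
        (V + f) ^ (p + 1) - V ^ (p + 1) - ((p + 1) / p) * ((V + f) ^ p - V ^ p) * V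
          ≤ ((p + 1) / 2) * (1 + c * δ) ^ (2 : ℝ) * V ^ (p - 1) * f ^ 2 := by
  refine ⟨p * (p + 1), mul_pos (by linarith) (by linarith), p, by linarith, ?_⟩
  intro V f δ hV hδ0 hδ2 hf
  have hpd : p * δ < 1 / 2 := by
    have h2p : (0:ℝ) < 2 * p := by linarith
    have := (lt_div_iff₀ h2p).1 hδ2
    nlinarith
  have hδ1 : δ < 1 := by nlinarith
  have hVp : (0:ℝ) < V ^ (p - 1) := Real.rpow_pos_of_pos hV _
  have hf2 : (0:ℝ) ≤ f ^ 2 := sq_nonneg f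
  set C₁ : ℝ := ((1 - δ) * V) ^ (p - 1) with hC₁def
  set C₂ : ℝ := ((1 + δ) * V) ^ (p - 1) with hC₂def
  have hC1 : ∀ x ∈ Icc (-(δ * V)) (δ * V), C₁ ≤ (V + x) ^ (p - 1) := by
    intro x hx
    apply Real.rpow_le_rpow (by nlinarith) (by nlinarith [hx.1]) (by linarith)
  have hC2 : ∀ x ∈ Icc (-(δ * V)) (δ * V), (V + x) ^ (p - 1) ≤ C₂ := by
    intro x hx
    apply Real.rpow_le_rpow (by nlinarith [hx.1]) (by nlinarith [hx.2]) (by linarith)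
  have low := sandwich_lower p V C₁ f δ hp hV hδ0 hδ1 hf hC1
  have up := sandwich_upper p V C₂ f δ hp hV hδ0 hδ1 hf hC2
  have hm1 : C₁ = (1 - δ) ^ (p - 1) * V ^ (p - 1) :=
    Real.mul_rpow (by linarith) hV.le
  have hm2 : C₂ = (1 + δ) ^ (p - 1) * V ^ (p - 1) :=
    Real.mul_rpow (by linarith) hV.le
  -- Bernoulli-type bounds
  have hB1 : 1 - p * δ ≤ (1 - δ) ^ (p - 1) := by
    rcases le_or_gt p 2 with hple | hpgt
    · have h := Real.rpow_le_rpow_of_exponent_ge (x := 1 - δ) (by linarith) (by linarith)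
        (by linarith : p - 1 ≤ 1)
      rw [Real.rpow_one] at h
      nlinarith
    · have h := one_add_mul_self_le_rpow_one_add (s := -δ) (by linarith) (by linarith : 1 ≤ p - 1)
      have : (1 : ℝ) + -δ = 1 - δ := by ring
      rw [this] at h
      nlinarith
  have hBp : 1 - p * δ ≤ (1 - δ) ^ p := by
    have h := one_add_mul_self_le_rpow_one_add (s := -δ) (by linarith) hp.le
    have : (1 : ℝ) + -δ = 1 - δ := by ring
    rw [this] at h
    linarith
  have hB2 : (1 + δ) ^ (p - 1) ≤ 1 + 2 * p * δ := bern_up p δ hp hδ0 hpd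
  have c1 : (1 - p * δ) * V ^ (p - 1) ≤ C₁ := by
    rw [hm1]; exact mul_le_mul_of_nonneg_right hB1 hVp.le
  have c2 : C₂ ≤ (1 + 2 * p * δ) * V ^ (p - 1) := by
    rw [hm2]; exact mul_le_mul_of_nonneg_right hB2 hVp.le
  have hq : (0:ℝ) ≤ (p + 1) / 2 * f ^ 2 := by positivity
  refine ⟨?_, ?_, ?_⟩
  · rw [abs_le]
    constructor
    · have step : (p + 1) / 2 * f ^ 2 * ((1 - p * δ) * V ^ (p - 1))
          ≤ (p + 1) / 2 * f ^ 2 * C₁ := mul_le_mul_of_nonneg_left c1 hq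
      have hpos : (0:ℝ) ≤ p * (p + 1) * δ * V ^ (p - 1) * f ^ 2 := by positivity
      linarith [low, step, hpos]
    · have step : (p + 1) / 2 * f ^ 2 * C₂
          ≤ (p + 1) / 2 * f ^ 2 * ((1 + 2 * p * δ) * V ^ (p - 1)) :=
        mul_le_mul_of_nonneg_left c2 hq
      linarith [up, step]
  · have hinv : (1 + p * δ) ^ (-(2:ℝ)) ≤ 1 - p * δ :=
      inv_sq_le (p * δ) (mul_pos (by linarith) hδ0) hpd
    have s1 : (p + 1) / 2 * V ^ (p - 1) * f ^ 2 * ((1 + p * δ) ^ (-(2:ℝ)))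
        ≤ (p + 1) / 2 * V ^ (p - 1) * f ^ 2 * (1 - p * δ) :=
      mul_le_mul_of_nonneg_left hinv (by positivity)
    have s2 : (p + 1) / 2 * f ^ 2 * ((1 - p * δ) * V ^ (p - 1))
        ≤ (p + 1) / 2 * f ^ 2 * C₁ := mul_le_mul_of_nonneg_left c1 hq
    linarith [low, s1, s2]
  · have hsq : 1 + 2 * p * δ ≤ (1 + p * δ) ^ (2:ℝ) := by
      have := le_rpow_sq (p * δ) (mul_pos (by linarith) hδ0)
      linarith
    have s3 : (p + 1) / 2 * f ^ 2 * C₂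
        ≤ (p + 1) / 2 * f ^ 2 * ((1 + 2 * p * δ) * V ^ (p - 1)) :=
      mul_le_mul_of_nonneg_left c2 hq
    have s4 : (p + 1) / 2 * f ^ 2 * V ^ (p - 1) * (1 + 2 * p * δ)
        ≤ (p + 1) / 2 * f ^ 2 * V ^ (p - 1) * ((1 + p * δ) ^ (2:ℝ)) :=
      mul_le_mul_of_nonneg_left hsq (by positivity)
    linarith [up, s3, s4]
end

section
/- Let p > 1, V > 0, and v = V + f with |f| ≤ δV for some 0 < δ < 1/(2p). Define a = ((v^(p−1) − V^(p−1))/(v^p − V^p))·v for v ≠ V. Then there exists a constant c_p > 0 depending only on p such that (p−1)/p − c_p·δ ≤ a ≤ (p−1)/p + c_p·δ. -/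
open Real Set

private lemma rpow_mvt (q a b : ℝ) (ha : 0 < a) (hab : a < b) :
    ∃ ξ, a < ξ ∧ ξ < b ∧ b ^ q - a ^ q = q * ξ ^ (q - 1) * (b - a) := by
  have hderiv : ∀ x ∈ Ioo a b, HasDerivAt (fun y : ℝ => y ^ q) (q * x ^ (q - 1)) x := by
    intro x hx
    exact Real.hasDerivAt_rpow_const (Or.inl (ne_of_gt (lt_trans ha hx.1)))
  have hcont : ContinuousOn (fun y : ℝ => y ^ q) (Icc a b) := by
    intro x hx
    exact (Real.continuousAt_rpow_const x q
      (Or.inl (ne_of_gt (lt_of_lt_of_le ha hx.1)))).continuousWithinAt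
  obtain ⟨ξ, hξ, h⟩ := exists_hasDerivAt_eq_slope (fun y : ℝ => y ^ q)
    (fun y => q * y ^ (q - 1)) hab hcont hderiv
  refine ⟨ξ, hξ.1, hξ.2, ?_⟩
  have hba : b - a ≠ 0 := by linarith [hab]
  field_simp at h
  linarith [h]

private lemma key (p x : ℝ) (hp : 1 < p) (h1 : 1 / 2 ≤ x) (h2 : x ≤ 2) (hne : x ≠ 1) :
    |(x ^ p - x) / (x ^ p - 1) - (p - 1) / p| ≤ (p - 1) * 4 ^ p / p * |x - 1| := by
  have hx0 : (0 : ℝ) < x := by linarith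
  have hp0 : (0 : ℝ) < p := by linarith
  -- get ξ strictly between x and 1 with the MVT identity
  obtain ⟨ξ, hξl, hξh, hξx, hid⟩ :
      ∃ ξ, 1 / 2 ≤ ξ ∧ ξ ≤ 2 ∧ |ξ - 1| ≤ |x - 1| ∧
        x ^ p - 1 = p * ξ ^ (p - 1) * (x - 1) := by
    rcases lt_or_gt_of_ne hne with hlt | hgt
    · obtain ⟨ξ, hξ1, hξ2, hξid⟩ := rpow_mvt p x 1 hx0 hlt
      refine ⟨ξ, by linarith, by linarith, ?_, ?_⟩
      · rw [abs_of_nonpos (by linarith), abs_of_nonpos (by linarith)]; linarith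
      · rw [Real.one_rpow] at hξid; linarith
    · obtain ⟨ξ, hξ1, hξ2, hξid⟩ := rpow_mvt p 1 x one_pos hgt
      refine ⟨ξ, by linarith, by linarith, ?_, ?_⟩
      · rw [abs_of_nonneg (by linarith), abs_of_nonneg (by linarith)]; linarith
      · rw [Real.one_rpow] at hξid; linarith
  have hξ0 : (0 : ℝ) < ξ := by linarith
  have hξp : (0 : ℝ) < ξ ^ (p - 1) := Real.rpow_pos_of_pos hξ0 _
  have hx1 : x - 1 ≠ 0 := sub_ne_zero.mpr hne
  -- bound |ξ^(p-1) - 1| ≤ (p-1) * 2^p * |ξ - 1|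
  have hbound : |ξ ^ (p - 1) - 1| ≤ (p - 1) * 2 ^ p * |ξ - 1| := by
    have heta : ∀ η : ℝ, 1 / 2 ≤ η → η ≤ 2 → η ^ (p - 2) ≤ (2 : ℝ) ^ p := by
      intro η hη1 hη2
      rcases le_total p 2 with hple | hpge
      · have h1 : η ^ (p - 2) ≤ (1 / 2 : ℝ) ^ (p - 2) :=
          Real.rpow_le_rpow_of_nonpos (by norm_num) hη1 (by linarith)
        have h2 : ((1 / 2 : ℝ)) ^ (p - 2) = (2 : ℝ) ^ (-(p - 2)) := by
          rw [one_div, Real.inv_rpow (by norm_num), ← Real.rpow_neg (by norm_num)]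
        have h3 : (2 : ℝ) ^ (-(p - 2)) ≤ (2 : ℝ) ^ p :=
          Real.rpow_le_rpow_of_exponent_le (by norm_num) (by linarith)
        linarith [h1, h2 ▸ h1, h3]
      · have h1 : η ^ (p - 2) ≤ (2 : ℝ) ^ (p - 2) :=
          Real.rpow_le_rpow (by linarith) hη2 (by linarith)
        have h3 : (2 : ℝ) ^ (p - 2) ≤ (2 : ℝ) ^ p :=
          Real.rpow_le_rpow_of_exponent_le (by norm_num) (by linarith)
        linarith
    rcases eq_or_ne ξ 1 with hξe | hξne
    · simp [hξe]
    rcases lt_or_gt_of_ne hξne with hlt | hgt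
    · obtain ⟨η, hη1, hη2, hηid⟩ := rpow_mvt (p - 1) ξ 1 hξ0 hlt
      rw [Real.one_rpow] at hηid
      have : ξ ^ (p - 1) - 1 = (p - 1) * η ^ (p - 1 - 1) * (ξ - 1) := by linarith
      rw [this, abs_mul, abs_mul]
      have hη : |η ^ (p - 1 - 1)| ≤ (2 : ℝ) ^ p := by
        rw [abs_of_pos (Real.rpow_pos_of_pos (by linarith) _)]
        have := heta η (by linarith) (by linarith)
        convert this using 2; ring
      have h1 : |p - 1| = p - 1 := abs_of_pos (by linarith)
      rw [h1]
      have := mul_le_mul_of_nonneg_right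
        (mul_le_mul_of_nonneg_left hη (by linarith : (0:ℝ) ≤ p - 1)) (abs_nonneg (ξ - 1))
      linarith
    · obtain ⟨η, hη1, hη2, hηid⟩ := rpow_mvt (p - 1) 1 ξ one_pos hgt
      rw [Real.one_rpow] at hηid
      have : ξ ^ (p - 1) - 1 = (p - 1) * η ^ (p - 1 - 1) * (ξ - 1) := by linarith
      rw [this, abs_mul, abs_mul]
      have hη : |η ^ (p - 1 - 1)| ≤ (2 : ℝ) ^ p := by
        rw [abs_of_pos (Real.rpow_pos_of_pos (by linarith) _)]
        have := heta η (by linarith) (by linarith)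
        convert this using 2; ring
      have h1 : |p - 1| = p - 1 := abs_of_pos (by linarith)
      rw [h1]
      have := mul_le_mul_of_nonneg_right
        (mul_le_mul_of_nonneg_left hη (by linarith : (0:ℝ) ≤ p - 1)) (abs_nonneg (ξ - 1))
      linarith
  -- lower bound on ξ^(p-1)
  have hξge : (2 : ℝ) ^ (1 - p) ≤ ξ ^ (p - 1) := by
    have h1 : ((1 / 2 : ℝ)) ^ (p - 1) ≤ ξ ^ (p - 1) :=
      Real.rpow_le_rpow (by norm_num) hξl (by linarith)
    have h2 : ((1 / 2 : ℝ)) ^ (p - 1) = (2 : ℝ) ^ (1 - p) := by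
      rw [one_div, Real.inv_rpow (by norm_num), ← Real.rpow_neg (by norm_num)]
      ring_nf
    linarith [h2 ▸ h1]
  -- the main identity
  have hDne : x ^ p - 1 ≠ 0 := by
    rw [hid]
    exact mul_ne_zero (mul_ne_zero (ne_of_gt hp0) (ne_of_gt hξp)) hx1
  have hmain : (x ^ p - x) / (x ^ p - 1) - (p - 1) / p
      = (ξ ^ (p - 1) - 1) / (p * ξ ^ (p - 1)) := by
    have hxp : x ^ p = p * ξ ^ (p - 1) * (x - 1) + 1 := by linarith
    rw [hid, hxp]
    field_simp
    ring
  rw [hmain]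
  rw [abs_div, abs_of_pos (mul_pos hp0 hξp)]
  rw [div_le_iff₀ (mul_pos hp0 hξp)]
  -- |ξ^(p-1)-1| ≤ (p-1)*2^p*|x-1| and p*ξ^(p-1) ≥ p*2^(1-p)
  have hb2 : |ξ ^ (p - 1) - 1| ≤ (p - 1) * 2 ^ p * |x - 1| := by
    calc |ξ ^ (p - 1) - 1| ≤ (p - 1) * 2 ^ p * |ξ - 1| := hbound
    _ ≤ (p - 1) * 2 ^ p * |x - 1| := by
        have : (0:ℝ) ≤ (p - 1) * 2 ^ p :=
          mul_nonneg (by linarith) (le_of_lt (Real.rpow_pos_of_pos (by norm_num) p))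
        exact mul_le_mul_of_nonneg_left hξx this
  have hpow : (p - 1) * 2 ^ p * |x - 1| ≤ (p - 1) * 4 ^ p / p * |x - 1| * (p * ξ ^ (p - 1)) := by
    have h4 : (4 : ℝ) ^ p = 2 ^ p * 2 ^ p := by
      rw [← Real.rpow_add (by norm_num : (0:ℝ) < 2)]
      rw [show (4 : ℝ) = 2 ^ (2 : ℝ) by
        rw [show (2:ℝ) = ((2:ℕ):ℝ) by norm_num, Real.rpow_natCast]; norm_num]
      rw [← Real.rpow_mul (by norm_num : (0:ℝ) ≤ 2)]
      ring_nf
    have hkey : (2 : ℝ) ^ p ≤ 4 ^ p / p * (p * ξ ^ (p - 1)) := by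
      rw [h4]
      have h2p : (0:ℝ) < (2:ℝ) ^ p := Real.rpow_pos_of_pos (by norm_num) p
      have hrw : (2:ℝ) ^ p * 2 ^ p / p * (p * ξ ^ (p - 1))
          = 2 ^ p * (2 ^ p * ξ ^ (p - 1)) := by field_simp
      rw [hrw]
      have : (1 : ℝ) ≤ 2 ^ p * ξ ^ (p - 1) := by
        have := mul_le_mul_of_nonneg_left hξge (le_of_lt h2p)
        have he : (2:ℝ) ^ p * 2 ^ (1 - p) = 2 := by
          rw [← Real.rpow_add (by norm_num : (0:ℝ) < 2)]
          norm_num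
        rw [he] at this
        nlinarith
      nlinarith
    have habs : (0:ℝ) ≤ (p - 1) * |x - 1| := mul_nonneg (by linarith) (abs_nonneg _)
    calc (p - 1) * 2 ^ p * |x - 1| = (p - 1) * |x - 1| * 2 ^ p := by ring
    _ ≤ (p - 1) * |x - 1| * (4 ^ p / p * (p * ξ ^ (p - 1))) :=
        mul_le_mul_of_nonneg_left hkey habs
    _ = (p - 1) * 4 ^ p / p * |x - 1| * (p * ξ ^ (p - 1)) := by ring
  linarith

theorem stmt_10 (p : ℝ) (hp : 1 < p) :
    ∃ c : ℝ, 0 < c ∧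
      ∀ V f δ : ℝ, 0 < V → 0 < δ → δ < 1 / (2 * p) → |f| ≤ δ * V → V + f ≠ V →
        (p - 1) / p - c * δ
            ≤ ((V + f) ^ (p - 1) - V ^ (p - 1)) / ((V + f) ^ p - V ^ p) * (V + f) ∧
          ((V + f) ^ (p - 1) - V ^ (p - 1)) / ((V + f) ^ p - V ^ p) * (V + f)
            ≤ (p - 1) / p + c * δ := by
  refine ⟨(p - 1) * 4 ^ p / p, ?_, ?_⟩
  · exact div_pos (mul_pos (by linarith) (Real.rpow_pos_of_pos (by norm_num) p)) (by linarith)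
  intro V f δ hV hδ hδp hf hne
  obtain ⟨x, hxdef⟩ : ∃ x : ℝ, x = 1 + f / V := ⟨_, rfl⟩
  have hp0 : (0 : ℝ) < p := by linarith
  have hδhalf : δ < 1 / 2 := by
    have : 1 / (2 * p) < 1 / 2 := by
      apply div_lt_div_of_pos_left <;> linarith
    linarith
  have hfV : |f / V| ≤ δ := by
    rw [abs_div, abs_of_pos hV, div_le_iff₀ hV]
    linarith [hf]
  have habs := abs_le.mp hfV
  have h1 : 1 / 2 ≤ x := by rw [hxdef]; linarith [habs.1]
  have h2 : x ≤ 2 := by rw [hxdef]; linarith [habs.2]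
  have hx0 : (0 : ℝ) < x := by linarith
  have hxne : x ≠ 1 := by
    rw [hxdef]
    intro h
    apply hne
    have : f / V = 0 := by linarith
    have : f = 0 := by field_simp at this; simpa using this
    linarith
  have hVx : V + f = V * x := by rw [hxdef]; field_simp
  have hxm1 : |x - 1| ≤ δ := by
    rw [hxdef]; simpa using hfV
  -- rewrite expression
  have hVp : (0:ℝ) < V ^ p := Real.rpow_pos_of_pos hV p
  have hVp1 : (0:ℝ) < V ^ (p - 1) := Real.rpow_pos_of_pos hV (p - 1)
  have hxpne : x ^ p - 1 ≠ 0 := by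
    rcases lt_or_gt_of_ne hxne with hlt | hgt
    · have : x ^ p < 1 ^ p := Real.rpow_lt_rpow (le_of_lt hx0) hlt hp0
      rw [Real.one_rpow] at this; linarith
    · have : (1:ℝ) ^ p < x ^ p := Real.rpow_lt_rpow (by norm_num) hgt hp0
      rw [Real.one_rpow] at this; linarith
  have hexpr : ((V + f) ^ (p - 1) - V ^ (p - 1)) / ((V + f) ^ p - V ^ p) * (V + f)
      = (x ^ p - x) / (x ^ p - 1) := by
    rw [hVx, Real.mul_rpow (le_of_lt hV) (le_of_lt hx0),
      Real.mul_rpow (le_of_lt hV) (le_of_lt hx0)]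
    have hVsplit : V ^ p = V ^ (p - 1) * V := by
      have h : V ^ (p - 1) = V ^ p / V := by
        rw [Real.rpow_sub hV, Real.rpow_one]
      rw [h]; field_simp
    have hxsplit : x ^ (p - 1) = x ^ p / x := by
      rw [Real.rpow_sub hx0, Real.rpow_one]
    rw [hVsplit, hxsplit]
    have hden : V ^ (p - 1) * V * x ^ p - V ^ (p - 1) * V ≠ 0 := by
      have h : V ^ (p - 1) * V * x ^ p - V ^ (p - 1) * V
          = V ^ (p - 1) * V * (x ^ p - 1) := by ring
      rw [h]
      exact mul_ne_zero (by positivity) hxpne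
    field_simp
  rw [hexpr]
  have hkey := key p x hp h1 h2 hxne
  have hchain : (p - 1) * 4 ^ p / p * |x - 1| ≤ (p - 1) * 4 ^ p / p * δ := by
    apply mul_le_mul_of_nonneg_left hxm1
    apply div_nonneg _ (by linarith)
    exact mul_nonneg (by linarith) (le_of_lt (Real.rpow_pos_of_pos (by norm_num) p))
  have := abs_le.mp hkey
  constructor <;> linarith [this.1, this.2]
end
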